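/- Let c=(c_i,c_j,c_k)∈ℝ³ with c_k≠0 and c_i²+c_j²>0, Z=Z_c. Then {E₁(Z),E₂(Z)} is a basis of the eigenspace of j(Z)² for the eigenvalue −c_k², {E₃(Z),E₄(Z)} is a basis of the eigenspace for the eigenvalue −|c|², and Y(Z) spans the kernel of j(Z). -/

import Mathlib

set_option maxHeartbeats 2000000


theorem stmt_6 (ci cj ck : ℝ) (hck : ck ≠ 0) (hij : ci ^ 2 + cj ^ 2 > 0)
    (J : Matrix (Fin 5) (Fin 5) ℝ)
    (hJ : J = !![0, 0, 0, -ck, cj;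
                 0, 0, ck, 0, -ci;
                 0, -ck, 0, 0, 0;
                 ck, 0, 0, 0, 0;
                 -cj, ci, 0, 0, 0])
    (nc : ℝ) (hnc : nc = Real.sqrt (ci ^ 2 + cj ^ 2 + ck ^ 2))
    (E1 E2 E3 E4 Y : Fin 5 → ℝ)
    (hE1 : E1 = ![ci, cj, 0, 0, 0])
    (hE2 : E2 = ![0, 0, -cj, ci, 0])
    (hE3 : E3 = nc • ![cj, -ci, 0, 0, 0])
    (hE4 : E4 = ![0, 0, ck * ci, ck * cj, -(ci ^ 2 + cj ^ 2)])
    (hY : Y = ![0, 0, ci, cj, ck]) :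
    (Module.End.eigenspace (Matrix.mulVecLin (J * J)) (-ck ^ 2) =
        Submodule.span ℝ {E1, E2} ∧ LinearIndependent ℝ ![E1, E2]) ∧
    (Module.End.eigenspace (Matrix.mulVecLin (J * J)) (-nc ^ 2) =
        Submodule.span ℝ {E3, E4} ∧ LinearIndependent ℝ ![E3, E4]) ∧
    (LinearMap.ker (Matrix.mulVecLin J) = Submodule.span ℝ {Y} ∧ Y ≠ 0) := by
  have hs : ci ^ 2 + cj ^ 2 ≠ 0 := ne_of_gt hij
  have hnc2 : nc ^ 2 = ci ^ 2 + cj ^ 2 + ck ^ 2 := by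
    rw [hnc]; exact Real.sq_sqrt (by positivity)
  have hncne : nc ≠ 0 := by
    intro h
    rw [h] at hnc2
    nlinarith [sq_nonneg ck]
  have hJJ : J * J =
      !![-(cj^2+ck^2), ci*cj, 0, 0, 0;
         ci*cj, -(ci^2+ck^2), 0, 0, 0;
         0, 0, -ck^2, 0, ci*ck;
         0, 0, 0, -ck^2, cj*ck;
         0, 0, ci*ck, cj*ck, -(ci^2+cj^2)] := by
    subst hJ
    ext i j
    fin_cases i <;> fin_cases j <;>
      simp [Matrix.mul_apply, Fin.sum_univ_five, Matrix.vecHead, Matrix.vecTail] <;> ring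
  rw [hJJ]
  subst hE1 hE2 hE3 hE4 hY
  refine ⟨⟨?_, ?_⟩, ⟨?_, ?_⟩, ?_, ?_⟩
  · -- eigenspace for -ck^2
    ext x
    rw [Module.End.mem_eigenspace_iff, Submodule.mem_span_pair]
    constructor
    · intro hx
      have h0 := congrFun hx 0
      have h1 := congrFun hx 1
      have h2 := congrFun hx 2
      have h3 := congrFun hx 3
      have h4 := congrFun hx 4
      simp [Matrix.mulVecLin, Matrix.mulVec, dotProduct, Fin.sum_univ_five]
        at h0 h1 h2 h3 h4
      have e1 : cj * (cj * x 0 - ci * x 1) = 0 := by linear_combination -h0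
      have e2 : ci * (cj * x 0 - ci * x 1) = 0 := by linear_combination h1
      have key01 : cj * x 0 - ci * x 1 = 0 := by
        have h : (ci ^ 2 + cj ^ 2) * (cj * x 0 - ci * x 1) = 0 := by
          linear_combination ci * e2 + cj * e1
        exact (mul_eq_zero.mp h).resolve_left hs
      have e4i : ci * x 4 = 0 := by
        rcases h2 with (h | h) | h
        · simp [h]
        · exact absurd h hck
        · simp [h]
      have e4j : cj * x 4 = 0 := by
        rcases h3 with (h | h) | h
        · simp [h]
        · exact absurd h hck
        · simp [h]
      have hx4 : x 4 = 0 := by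
        have h : (ci ^ 2 + cj ^ 2) * x 4 = 0 := by
          linear_combination ci * e4i + cj * e4j
        exact (mul_eq_zero.mp h).resolve_left hs
      have key23 : ci * x 2 + cj * x 3 = 0 := by
        have h : ck * (ci * x 2 + cj * x 3) = 0 := by
          linear_combination h4 + (ci ^ 2 + cj ^ 2 - ck ^ 2) * hx4
        exact (mul_eq_zero.mp h).resolve_left hck
      refine ⟨(ci * x 0 + cj * x 1) / (ci ^ 2 + cj ^ 2),
              (ci * x 3 - cj * x 2) / (ci ^ 2 + cj ^ 2), ?_⟩
      funext i
      fin_cases i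
      · simp only [Pi.add_apply, Pi.smul_apply, smul_eq_mul]
        simp
        field_simp
        linear_combination (-cj) * key01
      · simp
        field_simp
        linear_combination ci * key01
      · simp
        field_simp
        linear_combination (-ci) * key23
      · simp
        field_simp
        linear_combination (-cj) * key23
      · simpa using hx4.symm
    · rintro ⟨a, b, rfl⟩
      funext i
      fin_cases i <;>
        simp [Matrix.mulVecLin, Matrix.mulVec, dotProduct, Fin.sum_univ_five] <;>
        ring
  · -- linear independence E1 E2
    rw [LinearIndependent.pair_iff]
    intro s t h
    have h0 := congrFun h 0
    have h1 := congrFun h 1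
    have h2 := congrFun h 2
    have h3 := congrFun h 3
    simp at h0 h1 h2 h3
    constructor
    · rcases h0 with h | h
      · exact h
      rcases h1 with h' | h'
      · exact h'
      exact absurd (by simp [h, h']) hs
    · rcases h2 with h | h
      · exact h
      rcases h3 with h' | h'
      · exact h'
      exact absurd (by simp [h, h']) hs
  · -- eigenspace for -nc^2
    ext x
    rw [Module.End.mem_eigenspace_iff, Submodule.mem_span_pair]
    constructor
    · intro hx
      have h0 := congrFun hx 0
      have h1 := congrFun hx 1
      have h2 := congrFun hx 2
      have h3 := congrFun hx 3
      simp [Matrix.mulVecLin, Matrix.mulVec, dotProduct, Fin.sum_univ_five]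
        at h0 h1 h2 h3
      have e1 : ci * (ci * x 0 + cj * x 1) = 0 := by
        linear_combination h0 - x 0 * hnc2
      have e2 : cj * (ci * x 0 + cj * x 1) = 0 := by
        linear_combination h1 - x 1 * hnc2
      have key01 : ci * x 0 + cj * x 1 = 0 := by
        have h : (ci ^ 2 + cj ^ 2) * (ci * x 0 + cj * x 1) = 0 := by
          linear_combination ci * e1 + cj * e2
        exact (mul_eq_zero.mp h).resolve_left hs
      have key2 : (ci ^ 2 + cj ^ 2) * x 2 + ci * ck * x 4 = 0 := by
        linear_combination h2 - x 2 * hnc2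
      have key3 : (ci ^ 2 + cj ^ 2) * x 3 + cj * ck * x 4 = 0 := by
        linear_combination h3 - x 3 * hnc2
      refine ⟨(cj * x 0 - ci * x 1) / (nc * (ci ^ 2 + cj ^ 2)),
              -(x 4) / (ci ^ 2 + cj ^ 2), ?_⟩
      funext i
      fin_cases i
      · simp
        field_simp
        linear_combination (-ci) * key01
      · simp
        field_simp
        linear_combination (-cj) * key01
      · simp
        field_simp
        linear_combination -key2
      · simp
        field_simp
        linear_combination -key3
      · simp
        field_simp
        ring
    · rintro ⟨a, b, rfl⟩
      funext i
      fin_cases i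
      · simp [Matrix.mulVecLin, Matrix.mulVec, dotProduct, Fin.sum_univ_five]
        linear_combination (a * nc * cj) * hnc2
      · simp [Matrix.mulVecLin, Matrix.mulVec, dotProduct, Fin.sum_univ_five]
        linear_combination (-(a * nc * ci)) * hnc2
      · simp [Matrix.mulVecLin, Matrix.mulVec, dotProduct, Fin.sum_univ_five]
        linear_combination (b * ck * ci) * hnc2
      · simp [Matrix.mulVecLin, Matrix.mulVec, dotProduct, Fin.sum_univ_five]
        linear_combination (b * ck * cj) * hnc2
      · simp [Matrix.mulVecLin, Matrix.mulVec, dotProduct, Fin.sum_univ_five]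
        linear_combination (-(b * (ci ^ 2 + cj ^ 2))) * hnc2
  · -- linear independence E3 E4
    rw [LinearIndependent.pair_iff]
    intro s t h
    have h0 := congrFun h 0
    have h1 := congrFun h 1
    have h4 := congrFun h 4
    simp at h0 h1 h4
    constructor
    · rcases h0 with h | h | h
      · exact h
      · exact absurd h hncne
      rcases h1 with h' | h' | h'
      · exact h'
      · exact absurd h' hncne
      exact absurd (by simp [h, h']) hs
    · rcases h4 with h | h
      · exact h
      · exact absurd (by linarith : ci ^ 2 + cj ^ 2 = 0) hs
  · -- kernel of J
    subst hJ
    ext x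
    rw [LinearMap.mem_ker, Submodule.mem_span_singleton]
    constructor
    · intro hx
      have h0 := congrFun hx 0
      have h1 := congrFun hx 1
      have h2 := congrFun hx 2
      have h3 := congrFun hx 3
      simp [Matrix.mulVecLin, Matrix.mulVec, dotProduct, Fin.sum_univ_five]
        at h0 h1 h2 h3
      have hx1 : x 1 = 0 := h2.resolve_left hck
      have hx0 : x 0 = 0 := h3.resolve_left hck
      refine ⟨x 4 / ck, ?_⟩
      funext i
      fin_cases i
      · simpa using hx0.symm
      · simpa using hx1.symm
      · simp
        field_simp
        linear_combination -h1
      · simp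
        field_simp
        linear_combination h0
      · simp
        field_simp
    · rintro ⟨a, rfl⟩
      funext i
      fin_cases i <;>
        simp [Matrix.mulVecLin, Matrix.mulVec, dotProduct, Fin.sum_univ_five] <;>
        ring
  · -- Y ≠ 0
    intro h
    have := congrFun h 4
    simp at this
    exact hck this
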